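/- arXiv:2208.03860 — 5 statements merged into one kernel-verified Lean document; each statement's English description precedes it below -/
import Mathlib

section
/- The Slater spectrum is symmetric: for every t with 0 ≤ t ≤ T, the number of permutations ρ with S(ρ) = t equals the number of permutations ρ with S(ρ) = T - t, i.e. a_t = a_{T-t}. -/
/-- The inconsistency index `S(ρ) = ∑_{i<j} w (ρ j) (ρ i)`. -/
def inconsistency {M : ℕ} (w : Fin M → Fin M → ℕ) (ρ : Equiv.Perm (Fin M)) : ℕ :=
  ∑ i : Fin M, ∑ j ∈ Finset.Ioi i, w (ρ j) (ρ i)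

/-- The total number of comparisons `T = ∑_{m,n} w m n`. -/
def totalComparisons {M : ℕ} (w : Fin M → Fin M → ℕ) : ℕ :=
  ∑ m : Fin M, ∑ n : Fin M, w m n

/-- The Slater spectrum `a_t = card {ρ : S(ρ) = t}`. -/
def slaterSpectrum {M : ℕ} (w : Fin M → Fin M → ℕ) (t : ℕ) : ℕ :=
  (Finset.univ.filter fun ρ : Equiv.Perm (Fin M) => inconsistency w ρ = t).card

lemma inconsistency_rev {M : ℕ} (w : Fin M → Fin M → ℕ) (ρ : Equiv.Perm (Fin M)) :
    inconsistency w (ρ * Fin.revPerm) = ∑ i : Fin M, ∑ j ∈ Finset.Iio i, w (ρ j) (ρ i) := by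
  unfold inconsistency
  refine Fintype.sum_equiv Fin.revPerm _ _ fun a => ?_
  refine Finset.sum_nbij' (fun j => Fin.rev j) (fun j => Fin.rev j) ?_ ?_ ?_ ?_ ?_ <;>
    simp [Fin.rev_lt_rev, Fin.lt_rev_iff, Fin.rev_lt_iff, Equiv.Perm.mul_apply]

lemma inconsistency_add_rev {M : ℕ} (w : Fin M → Fin M → ℕ) (hw : ∀ m, w m m = 0)
    (ρ : Equiv.Perm (Fin M)) :
    inconsistency w ρ + inconsistency w (ρ * Fin.revPerm) = totalComparisons w := by
  rw [inconsistency_rev]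
  unfold inconsistency totalComparisons
  rw [← Finset.sum_add_distrib]
  have : ∀ i : Fin M, (∑ j ∈ Finset.Ioi i, w (ρ j) (ρ i)) +
      (∑ j ∈ Finset.Iio i, w (ρ j) (ρ i)) = ∑ j : Fin M, w (ρ j) (ρ i) := by
    intro i
    rw [add_comm, ← Finset.sum_union (by simp only [Finset.disjoint_left, Finset.mem_Iio, Finset.mem_Ioi]; intro a h1 h2; exact absurd h1 (not_lt.2 h2.le))]
    have h : Finset.Iio i ∪ Finset.Ioi i = Finset.univ.erase i := by
      ext j; simp only [Finset.mem_union, Finset.mem_Iio, Finset.mem_Ioi, Finset.mem_erase, Finset.mem_univ, and_true]; omega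
    rw [h, Finset.sum_erase _ (by simp [hw])]
  simp_rw [this]
  rw [Finset.sum_comm]
  rw [← Equiv.sum_comp ρ (fun m => ∑ n : Fin M, w m n)]
  refine Finset.sum_congr rfl fun j _ => ?_
  rw [← Equiv.sum_comp ρ (fun n => w (ρ j) n)]

/-- The Slater spectrum is symmetric: for every `t ≤ T`, `a_t = a_{T-t}`. -/
theorem slaterSpectrum_symm
    (M : ℕ) (w : Fin M → Fin M → ℕ) (hw : ∀ m, w m m = 0)
    (t : ℕ) (ht : t ≤ totalComparisons w) :
    slaterSpectrum w t = slaterSpectrum w (totalComparisons w - t) := by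
  unfold slaterSpectrum
  refine Finset.card_bij' (fun ρ _ => ρ * Fin.revPerm) (fun ρ _ => ρ * Fin.revPerm)
    ?_ ?_ ?_ ?_
  · intro ρ hρ
    simp only [Finset.mem_filter, Finset.mem_univ, true_and] at hρ ⊢
    have := inconsistency_add_rev w hw ρ
    omega
  · intro σ hσ
    simp only [Finset.mem_filter, Finset.mem_univ, true_and] at hσ ⊢
    have := inconsistency_add_rev w hw σ
    omega
  · intro ρ _
    ext i
    simp [Equiv.Perm.mul_apply]
  · intro ρ _
    ext i
    simp [Equiv.Perm.mul_apply]
end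

section
/- For every real number p and every permutation ρ of Fin M, the likelihood of the observation matrix factors through the inconsistency index: ∏_{i<j} p^{w(ρ i, ρ j)} · (1-p)^{w(ρ j, ρ i)} = p^{T - S(ρ)} · (1-p)^{S(ρ)}, where the product runs over all pairs of positions i < j in Fin M. -/
/-- The likelihood of the observation matrix factors through the inconsistency index:
`∏_{i<j} p^{w(ρ i, ρ j)} (1-p)^{w(ρ j, ρ i)} = p^{T - S(ρ)} (1-p)^{S(ρ)}`. -/
theorem likelihood_factors_through_inconsistency
    (M : ℕ) (w : Fin M → Fin M → ℕ) (hw : ∀ m, w m m = 0)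
    (p : ℝ) (ρ : Equiv.Perm (Fin M)) :
    (∏ i : Fin M, ∏ j ∈ Finset.Ioi i,
        p ^ (w (ρ i) (ρ j)) * (1 - p) ^ (w (ρ j) (ρ i))) =
      p ^ (totalComparisons w - inconsistency w ρ) * (1 - p) ^ (inconsistency w ρ) := by
  have key : (∑ i : Fin M, ∑ j ∈ Finset.Ioi i, w (ρ i) (ρ j)) + inconsistency w ρ
      = totalComparisons w := by
    unfold inconsistency totalComparisons
    rw [← Finset.sum_add_distrib]
    simp_rw [← Finset.sum_add_distrib]
    have := Finset.sum_sum_Ioi_add_eq_sum_sum_off_diag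
      (fun j i : Fin M => w (ρ j) (ρ i))
    rw [show (∑ i : Fin M, ∑ j ∈ Finset.Ioi i, (w (ρ i) (ρ j) + w (ρ j) (ρ i)))
        = ∑ i : Fin M, ∑ j ∈ Finset.Ioi i, (w (ρ j) (ρ i) + w (ρ i) (ρ j)) by
      simp [Nat.add_comm], this]
    rw [show (∑ m : Fin M, ∑ n : Fin M, w m n)
        = ∑ i : Fin M, ∑ j : Fin M, w (ρ j) (ρ i) by
      symm
      calc ∑ i : Fin M, ∑ j : Fin M, w (ρ j) (ρ i)
          = ∑ i : Fin M, ∑ j : Fin M, w j (ρ i) :=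
            Finset.sum_congr rfl fun i _ => Equiv.sum_comp ρ (fun j => w j (ρ i))
        _ = ∑ i : Fin M, ∑ j : Fin M, w j i := Equiv.sum_comp ρ (fun i => ∑ j : Fin M, w j i)
        _ = ∑ m : Fin M, ∑ n : Fin M, w m n := Finset.sum_comm]
    refine Finset.sum_congr rfl fun i _ => ?_
    rw [← Finset.sum_compl_add_sum {i} (fun j => w (ρ j) (ρ i)),
      Finset.sum_singleton, hw, add_zero]
  have hS : inconsistency w ρ ≤ totalComparisons w := by omega
  have hA : totalComparisons w - inconsistency w ρ
      = ∑ i : Fin M, ∑ j ∈ Finset.Ioi i, w (ρ i) (ρ j) := by omega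
  rw [hA, inconsistency]
  simp_rw [Finset.prod_mul_distrib, Finset.prod_pow_eq_pow_sum]
end

section
/- Normalization of the posterior: let T be a natural number and a_0, …, a_T real numbers satisfying the symmetry a_t = a_{T-t} for all t ≤ T, and let φ(p) = ∑_{t=0}^{T} a_t p^{T-t} (1-p)^{t}. Then ∫_{1/2}^{1} φ(p) dp = (1 / (2(T+1))) · ∑_{t=0}^{T} a_t / binom(T, t). -/
open intervalIntegral


lemma beta_nat (n m : ℕ) : ∫ x in (0:ℝ)..1, x ^ m * (1 - x) ^ n
    = (m.factorial * n.factorial : ℝ) / (m + n + 1).factorial := by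
  induction n generalizing m with
  | zero => simp [integral_pow, Nat.factorial_succ]; field_simp
  | succ n IH =>
    have hc : ∀ (j k : ℕ), Continuous fun x : ℝ => x ^ j * (1 - x) ^ k := by
      intro j k; fun_prop
    have key : ∫ x in (0:ℝ)..1,
        ((m+1:ℝ) * (x ^ m * (1-x)^(n+1)) - (n+1:ℝ) * (x ^ (m+1) * (1-x)^n)) = 0 := by
      have : ∀ x ∈ Set.uIcc (0:ℝ) 1, HasDerivAt (fun x : ℝ => x ^ (m+1) * (1-x)^(n+1))
          ((m+1:ℝ) * (x ^ m * (1-x)^(n+1)) - (n+1:ℝ) * (x ^ (m+1) * (1-x)^n)) x := by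
        intro x _
        have h1 : HasDerivAt (fun x : ℝ => x ^ (m+1)) ((m+1:ℝ) * x ^ m) x := by
          simpa using hasDerivAt_pow (m+1) x
        have h2 : HasDerivAt (fun x : ℝ => (1-x) ^ (n+1)) (-((n+1:ℝ) * (1-x) ^ n)) x := by
          have := ((hasDerivAt_pow (n+1) (1-x)).comp x ((hasDerivAt_const x (1:ℝ)).sub (hasDerivAt_id x)))
          simpa [Function.comp_def] using this
        have := h1.mul h2
        exact this.congr_deriv (by ring)
      rw [integral_eq_sub_of_hasDerivAt this (by apply Continuous.intervalIntegrable; fun_prop)]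
      simp
    rw [integral_sub (by apply Continuous.intervalIntegrable; fun_prop)
        (by apply Continuous.intervalIntegrable; fun_prop),
      intervalIntegral.integral_const_mul, intervalIntegral.integral_const_mul, IH (m+1), sub_eq_zero] at key
    have h1 : ((m + 1).factorial : ℝ) ≠ 0 := Nat.cast_ne_zero.2 (Nat.factorial_ne_zero _)
    have h2 : ((m + n + 2).factorial : ℝ) ≠ 0 := Nat.cast_ne_zero.2 (Nat.factorial_ne_zero _)
    have hm : ((m:ℝ) + 1) ≠ 0 := by positivity
    have : (∫ x in (0:ℝ)..1, x ^ m * (1-x)^(n+1))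
        = ((n:ℝ)+1) * (((m+1).factorial * n.factorial : ℝ) / (m + 1 + n + 1).factorial) / ((m:ℝ)+1) := by
      field_simp at key ⊢; linarith [key]
    rw [this]
    have e1 : (m + 1 + n + 1) = (m + (n+1) + 1) := by ring
    rw [e1, Nat.factorial_succ m, Nat.factorial_succ n]
    push_cast
    field_simp

/-- Normalization of the posterior: if `a_t = a_{T-t}` for all `t ≤ T` and
`φ(p) = ∑_{t=0}^{T} a_t p^{T-t} (1-p)^t`, then
`∫_{1/2}^1 φ(p) dp = (1 / (2(T+1))) ∑_{t=0}^{T} a_t / binom(T,t)`. -/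
theorem posterior_normalization
    (T : ℕ) (a : ℕ → ℝ) (hsym : ∀ t ≤ T, a t = a (T - t)) :
    (∫ p in (1/2 : ℝ)..1,
        ∑ t ∈ Finset.range (T + 1), a t * (p ^ (T - t) * (1 - p) ^ t)) =
      (1 / (2 * (T + 1 : ℝ))) *
        ∑ t ∈ Finset.range (T + 1), a t / (T.choose t : ℝ) := by
  set f : ℝ → ℝ := fun p => ∑ t ∈ Finset.range (T + 1), a t * (p ^ (T - t) * (1 - p) ^ t)
    with hf
  have hcont : Continuous f := by
    apply continuous_finset_sum; intro t _; fun_prop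
  have hint : ∀ u v : ℝ, IntervalIntegrable f MeasureTheory.volume u v :=
    fun u v => hcont.intervalIntegrable u v
  have hrefl : ∀ p : ℝ, f (1 - p) = f p := by
    intro p
    rw [hf]
    simp only [sub_sub_cancel]
    conv_rhs => rw [← Finset.sum_range_reflect]
    apply Finset.sum_congr rfl
    intro t ht
    have htT : t ≤ T := Nat.lt_succ_iff.mp (Finset.mem_range.mp ht)
    have h1 : T + 1 - 1 - t = T - t := by omega
    rw [h1, ← hsym t htT, Nat.sub_sub_self htT]
    ring
  have h2 : (∫ p in (0:ℝ)..(1/2 : ℝ), f p) = ∫ p in (1/2:ℝ)..1, f p := by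
    have hc : (∫ p in (0:ℝ)..(1/2 : ℝ), f (1 - p)) = ∫ p in (1 - (1/2:ℝ))..(1 - 0 : ℝ), f p :=
      integral_comp_sub_left f 1
    rw [show (∫ p in (0:ℝ)..(1/2:ℝ), f p) = ∫ p in (0:ℝ)..(1/2:ℝ), f (1 - p) by
      simp [hrefl], hc]
    norm_num
  have h3 : (∫ p in (0:ℝ)..1, f p) = 2 * ∫ p in (1/2:ℝ)..1, f p := by
    rw [← integral_add_adjacent_intervals (hint 0 (1/2)) (hint (1/2) 1), h2]; ring
  have h4 : (∫ p in (0:ℝ)..1, f p)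
      = ∑ t ∈ Finset.range (T + 1),
          a t * (((T - t).factorial * t.factorial : ℝ) / (T + 1).factorial) := by
    rw [hf]
    rw [integral_finset_sum (fun t _ => by
      apply Continuous.intervalIntegrable; fun_prop)]
    apply Finset.sum_congr rfl
    intro t ht
    have htT : t ≤ T := Nat.lt_succ_iff.mp (Finset.mem_range.mp ht)
    rw [integral_const_mul, beta_nat]
    have : T - t + t + 1 = T + 1 := by omega
    rw [this]
  have key : (∫ p in (1/2:ℝ)..1, f p)
      = (1/2) * ∑ t ∈ Finset.range (T + 1),
          a t * (((T - t).factorial * t.factorial : ℝ) / (T + 1).factorial) := by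
    rw [← h4, h3]; ring
  rw [key, Finset.mul_sum, Finset.mul_sum]
  apply Finset.sum_congr rfl
  intro t ht
  have htT : t ≤ T := Nat.lt_succ_iff.mp (Finset.mem_range.mp ht)
  have hch : (T.choose t : ℝ) * t.factorial * (T - t).factorial = T.factorial := by
    exact_mod_cast congrArg (Nat.cast : ℕ → ℝ) (Nat.choose_mul_factorial_mul_factorial htT)
  have hch0 : (T.choose t : ℝ) ≠ 0 := Nat.cast_ne_zero.2 (Nat.choose_pos htT).ne'
  have hTf : ((T + 1).factorial : ℝ) = (T + 1) * T.factorial := by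
    rw [Nat.factorial_succ]; push_cast; ring
  have hT0 : ((T:ℝ) + 1) ≠ 0 := by positivity
  have hf0 : (T.factorial : ℝ) ≠ 0 := Nat.cast_ne_zero.2 (Nat.factorial_ne_zero _)
  rw [hTf]
  field_simp
  linear_combination (a t) * hch
end

section
/- Sign of the curvature of the degenerate posterior at 1/2: let T ≥ 2 and s be natural numbers with s ≤ T, let a > 0 be a real number, and define φ̃(p) = a·(p^{T-s}(1-p)^{s} + p^{s}(1-p)^{T-s}). Then the second derivative of φ̃ at p = 1/2 is positive if and only if (s - T/2)² > T/4, and negative if and only if (s - T/2)² < T/4. -/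
lemma hasDerivAt_g (m s : ℕ) (p : ℝ) :
    HasDerivAt (fun p : ℝ => p ^ m * (1 - p) ^ s)
      ((m : ℝ) * p ^ (m - 1) * (1 - p) ^ s - (s : ℝ) * p ^ m * (1 - p) ^ (s - 1)) p := by
  have h2 : HasDerivAt (fun p : ℝ => (1 - p) ^ s) (-((s : ℝ) * (1 - p) ^ (s - 1))) p := by
    have := (hasDerivAt_pow s (1 - p)).comp p ((hasDerivAt_id p).const_sub 1)
    simpa [Function.comp_def] using this
  have := (hasDerivAt_pow m p).mul h2
  exact this.congr_deriv (by ring)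

lemma hasDerivAt_D (m s : ℕ) (p : ℝ) :
    HasDerivAt (fun p : ℝ =>
        (m : ℝ) * p ^ (m - 1) * (1 - p) ^ s - (s : ℝ) * p ^ m * (1 - p) ^ (s - 1))
      ((m : ℝ) * (((m - 1 : ℕ) : ℝ) * p ^ (m - 1 - 1) * (1 - p) ^ s
          - (s : ℝ) * p ^ (m - 1) * (1 - p) ^ (s - 1))
        - (s : ℝ) * ((m : ℝ) * p ^ (m - 1) * (1 - p) ^ (s - 1)
          - ((s - 1 : ℕ) : ℝ) * p ^ m * (1 - p) ^ (s - 1 - 1))) p := by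
  have h1 := (hasDerivAt_g (m - 1) s p).const_mul (m : ℝ)
  have h2 := (hasDerivAt_g m (s - 1) p).const_mul (s : ℝ)
  have := h1.sub h2
  convert this using 2 with p
  all_goals try ring
  all_goals try rfl
  all_goals try (simp only [Pi.sub_apply]; ring)

lemma keyval (m s : ℕ) (a : ℝ) :
    iteratedDeriv 2
        (fun p : ℝ => a * (p ^ m * (1 - p) ^ s + p ^ s * (1 - p) ^ m)) (1/2)
      = a * 8 * (1/2 : ℝ) ^ m * (1/2 : ℝ) ^ s * (((m : ℝ) - s) ^ 2 - ((m : ℝ) + s)) := by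
  rw [iteratedDeriv_succ, iteratedDeriv_one]
  have hd : deriv (fun p : ℝ => a * (p ^ m * (1 - p) ^ s + p ^ s * (1 - p) ^ m))
      = fun p : ℝ => a * (((m : ℝ) * p ^ (m - 1) * (1 - p) ^ s - (s : ℝ) * p ^ m * (1 - p) ^ (s - 1))
        + ((s : ℝ) * p ^ (s - 1) * (1 - p) ^ m - (m : ℝ) * p ^ s * (1 - p) ^ (m - 1))) := by
    funext p
    exact (((hasDerivAt_g m s p).add (hasDerivAt_g s m p)).const_mul a).deriv
  rw [hd]
  have hD := ((hasDerivAt_D m s (1/2)).add (hasDerivAt_D s m (1/2))).const_mul a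
  simp only [Pi.add_apply] at hD
  rw [hD.deriv]
  rcases m with _ | _ | m <;> rcases s with _ | _ | s <;>
    · push_cast
      norm_num [pow_succ]
      try ring

/-- Sign of the curvature of the degenerate posterior at `1/2`: for `T ≥ 2`, `s ≤ T` and
`a > 0`, with `φ̃(p) = a (p^{T-s}(1-p)^s + p^s(1-p)^{T-s})`, the second derivative of `φ̃`
at `p = 1/2` is positive iff `(s - T/2)² > T/4`, and negative iff `(s - T/2)² < T/4`. -/
theorem degenerate_posterior_curvature_sign
    (T s : ℕ) (hT : 2 ≤ T) (hs : s ≤ T) (a : ℝ) (ha : 0 < a) :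
    (0 < iteratedDeriv 2
        (fun p : ℝ => a * (p ^ (T - s) * (1 - p) ^ s + p ^ s * (1 - p) ^ (T - s))) (1/2)
      ↔ (T : ℝ) / 4 < ((s : ℝ) - (T : ℝ) / 2) ^ 2) ∧
    (iteratedDeriv 2
        (fun p : ℝ => a * (p ^ (T - s) * (1 - p) ^ s + p ^ s * (1 - p) ^ (T - s))) (1/2) < 0
      ↔ ((s : ℝ) - (T : ℝ) / 2) ^ 2 < (T : ℝ) / 4) := by
  set m := T - s with hm
  have hT' : (T : ℝ) = (m : ℝ) + s := by
    rw [hm, Nat.cast_sub hs]; ring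
  rw [keyval m s a]
  have hK : (0 : ℝ) < a * 8 * (1/2 : ℝ) ^ m * (1/2 : ℝ) ^ s := by positivity
  set K := a * 8 * (1/2 : ℝ) ^ m * (1/2 : ℝ) ^ s with hKdef
  set Q := ((m : ℝ) - s) ^ 2 - ((m : ℝ) + s) with hQdef
  have h1 : (0 < K * Q ↔ 0 < Q) := by
    constructor
    · intro h
      by_contra hc
      push_neg at hc
      nlinarith
    · intro h; exact mul_pos hK h
  have h2 : (K * Q < 0 ↔ Q < 0) := by
    constructor
    · intro h
      by_contra hc
      push_neg at hc
      nlinarith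
    · intro h; nlinarith
  rw [h1, h2, hT']
  constructor
  · constructor <;> intro h <;> [nlinarith; nlinarith]
  · constructor <;> intro h <;> [nlinarith; nlinarith]
end

section
/- Recursion for the Slater spectrum (correctness of Algorithm 1): let s be a nonempty finite subset of Fin M and let Ord(s) denote the set of duplicate-free lists of elements of Fin M whose set of elements equals s. Then for every real number u, ∑_{l ∈ Ord(s)} u^{C(l)} = ∑_{e ∈ s} u^{d_e(s)} · ( ∑_{l' ∈ Ord(s \ {e})} u^{C(l')} ), where d_e(s) = ∑_{n ∈ s \ {e}} w e n. -/
/-- The consistency index of a list `l = [l_0, …, l_{k-1}]`: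
`C(l) = ∑_{0 ≤ i < j < k} w (l_i) (l_j)`. -/
def listConsistency {M : ℕ} (w : Fin M → Fin M → ℕ) (l : List (Fin M)) : ℕ :=
  ∑ i : Fin l.length, ∑ j : Fin l.length,
    if (i : ℕ) < (j : ℕ) then w (l.get i) (l.get j) else 0

/-- `OrdSet s`: the set of duplicate-free lists of elements of `Fin M` whose set of elements
equals the finset `s`. -/
def OrdSet {M : ℕ} (s : Finset (Fin M)) : Set (List (Fin M)) :=
  {l : List (Fin M) | l.Nodup ∧ l.toFinset = s}

noncomputable def ordFinset {M : ℕ} (s : Finset (Fin M)) : Finset (List (Fin M)) :=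
  s.toList.permutations.toFinset

lemma ordSet_eq {M : ℕ} (s : Finset (Fin M)) : OrdSet s = ↑(ordFinset s) := by
  ext l
  simp only [OrdSet, Set.mem_setOf_eq, ordFinset, Finset.mem_coe, List.mem_toFinset,
    List.mem_permutations]
  constructor
  · rintro ⟨hnd, rfl⟩
    exact List.perm_of_nodup_nodup_toFinset_eq hnd (Finset.nodup_toList _) (by simp)
  · intro h
    refine ⟨h.nodup_iff.mpr (Finset.nodup_toList _), ?_⟩
    ext x; simp [h.mem_iff]

lemma mem_ordFinset {M : ℕ} {s : Finset (Fin M)} {l : List (Fin M)} :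
    l ∈ ordFinset s ↔ l.Nodup ∧ l.toFinset = s := by
  rw [← Finset.mem_coe, ← ordSet_eq]; exact Iff.rfl

lemma listConsistency_cons {M : ℕ} (w : Fin M → Fin M → ℕ) (e : Fin M) (l : List (Fin M)) :
    listConsistency w (e :: l) =
      (∑ i : Fin l.length, w e (l.get i)) + listConsistency w l := by
  show (∑ i : Fin (l.length + 1), ∑ j : Fin (l.length + 1),
      if (i : ℕ) < (j : ℕ) then w ((e :: l).get i) ((e :: l).get j) else 0) = _
  rw [Fin.sum_univ_succ]
  congr 1
  · rw [Fin.sum_univ_succ]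
    simp
  · unfold listConsistency
    apply Finset.sum_congr rfl
    intro i _
    rw [Fin.sum_univ_succ]
    simp [Nat.succ_lt_succ_iff]

lemma sum_get_eq {M : ℕ} (f : Fin M → ℕ) (l : List (Fin M)) (h : l.Nodup) :
    ∑ i : Fin l.length, f (l.get i) = ∑ n ∈ l.toFinset, f n := by
  rw [List.sum_toFinset _ h, ← Fin.sum_univ_fun_getElem]
  rfl

/-- Recursion for the Slater spectrum (correctness of Algorithm 1): for a nonempty finset
`s` and every real `u`,
`∑_{l ∈ OrdSet s} u^{C(l)} = ∑_{e ∈ s} u^{d_e(s)} ∑_{l' ∈ OrdSet (s \ {e})} u^{C(l')}`,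
where `d_e(s) = ∑_{n ∈ s \ {e}} w e n`. -/
theorem slaterSpectrum_recursion
    (M : ℕ) (w : Fin M → Fin M → ℕ) (hw : ∀ m, w m m = 0)
    (s : Finset (Fin M)) (hs : s.Nonempty) (u : ℝ) :
    (∑ᶠ l ∈ OrdSet s, u ^ listConsistency w l) =
      ∑ e ∈ s, u ^ (∑ n ∈ s.erase e, w e n) *
        ∑ᶠ l ∈ OrdSet (s.erase e), u ^ listConsistency w l := by
  have : Inhabited (Fin M) := ⟨hs.choose⟩
  simp only [ordSet_eq, finsum_mem_coe_finset, Finset.mul_sum]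
  rw [Finset.sum_sigma']
  symm
  apply Finset.sum_nbij' (i := fun p => p.1 :: p.2) (j := fun l => ⟨l.headI, l.tail⟩)
  · rintro ⟨e, l⟩ hp
    simp only [Finset.mem_sigma, mem_ordFinset] at hp
    obtain ⟨he, hnd, hts⟩ := hp
    have hel : e ∉ l := by
      intro hmem
      have : e ∈ s.erase e := hts ▸ List.mem_toFinset.mpr hmem
      exact (Finset.notMem_erase e s) this
    rw [mem_ordFinset]
    constructor
    · exact List.nodup_cons.mpr ⟨hel, hnd⟩
    · rw [List.toFinset_cons, hts, Finset.insert_erase he]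
  · intro l hl
    rw [mem_ordFinset] at hl
    obtain ⟨hnd, hts⟩ := hl
    have hne : l ≠ [] := by
      rintro rfl
      simp only [List.toFinset_nil] at hts
      exact hs.ne_empty hts.symm
    obtain ⟨a, t, rfl⟩ := List.exists_cons_of_ne_nil hne
    obtain ⟨ha, hndt⟩ := List.nodup_cons.mp hnd
    rw [List.toFinset_cons] at hts
    simp only [List.headI, List.tail, Finset.mem_sigma, mem_ordFinset]
    refine ⟨hts ▸ Finset.mem_insert_self a _, hndt, ?_⟩
    rw [← hts, Finset.erase_insert (by simpa using ha)]
  · rintro ⟨e, l⟩ hp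
    rfl
  · intro l hl
    rw [mem_ordFinset] at hl
    have hne : l ≠ [] := by
      rintro rfl
      simp only [List.toFinset_nil] at hl
      exact hs.ne_empty hl.2.symm
    obtain ⟨a, t, rfl⟩ := List.exists_cons_of_ne_nil hne
    rfl
  · rintro ⟨e, l⟩ hp
    simp only [Finset.mem_sigma, mem_ordFinset] at hp
    obtain ⟨he, hnd, hts⟩ := hp
    rw [listConsistency_cons, sum_get_eq _ _ hnd, hts, pow_add]
end
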